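/- In the approximation setting, assume additionally that X_m : U → V is a continuous linear map and C₁ ≥ 0 is such that ‖X_m g_μ − L_μ‖_V ≤ C₁ for every μ ∈ P. Then (1/|P|) ∫_P ‖X^N_μ − L_μ‖_V² dμ ≤ 3 C₁² (1 + 2 N² Z_N + 8 N δ_N² / (|P| τ_N)) + (3/|P|) ∫_P ‖X_m(I^N g_μ − g_μ)‖_V² dμ. -/

import Mathlib

set_option maxHeartbeats 1000000


open MeasureTheory Bornology
open scoped RealInnerProductSpace


private lemma aux_sq_div (c a b tm tN : ℝ) (hc : c = a + b) (htm : 0 < tm)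
    (htN : 0 < tN) (hle : tN ≤ tm) :
    c^2/tm ≤ 2*(a^2/tm) + 2*(b^2/tN) := by
  have h1 : c^2 ≤ 2*a^2 + 2*b^2 := by
    subst hc
    nlinarith [sq_nonneg (a-b)]
  have h2 : c^2/tm ≤ (2*a^2+2*b^2)/tm := div_le_div_of_nonneg_right h1 htm.le
  have h3 : b^2/tm ≤ b^2/tN := div_le_div_of_nonneg_left (sq_nonneg b) htN hle
  calc c^2/tm ≤ (2*a^2+2*b^2)/tm := h2
    _ = 2*(a^2/tm) + 2*(b^2/tm) := by ring
    _ ≤ 2*(a^2/tm) + 2*(b^2/tN) := by linarith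

private lemma aux_assemble (D A B Cn C₁ X Y T : ℝ)
    (hDnn : 0 ≤ D) (hAnn : 0 ≤ A) (hBnn : 0 ≤ B) (hCnn : 0 ≤ Cn)
    (htri : D ≤ A + B + Cn) (hA : A^2 ≤ C₁^2 * T) (hT : T ≤ 2*X + 2*Y)
    (hC : Cn ≤ C₁) :
    D^2 ≤ 3*C₁^2*(1 + (2*X + 2*Y)) + 3*B^2 := by
  have hD2 : D^2 ≤ (A+B+Cn)^2 := by nlinarith
  have h4 : Cn^2 ≤ C₁^2 := by nlinarith
  have h3 : C₁^2*T ≤ C₁^2*(2*X+2*Y) := mul_le_mul_of_nonneg_left hT (sq_nonneg C₁)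
  nlinarith [sq_nonneg (A-B), sq_nonneg (A-Cn), sq_nonneg (B-Cn)]

private lemma aux_final (PV τN S δ J C₁ Nr Z : ℝ)
    (hPV : 0 < PV) (hτN : 0 < τN) (hS : 0 ≤ S) (hδ : 0 ≤ δ) (hN1 : 1 ≤ Nr)
    (hZv : Z = S / (Nr * PV)) :
    3*C₁^2*(PV + (2*S + 2*(δ/τN))) + 3*J
      ≤ PV * (3*C₁^2*(1 + 2*Nr^2*Z + 8*Nr*δ/(PV*τN)) + 3/PV*J) := by
  rw [hZv]
  have e1 : PV * (3*C₁^2*(1 + 2*Nr^2*(S/(Nr*PV)) + 8*Nr*δ/(PV*τN)) + 3/PV*J)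
      = 3*C₁^2*(PV + (2*Nr*S + 8*Nr*(δ/τN))) + 3*J := by
    field_simp
    ring
  rw [e1]
  have h2 : 2*S ≤ 2*Nr*S := by nlinarith
  have h3 : 2*(δ/τN) ≤ 8*Nr*(δ/τN) := by
    have hq : 0 ≤ δ/τN := div_nonneg hδ hτN.le
    nlinarith
  nlinarith [sq_nonneg C₁]

/-- (Proposition 2 of the paper.) In the approximation setting, if moreover
`X_m : U → V` is a continuous linear map and `C₁ ≥ 0` satisfies `‖X_m g_μ − L_μ‖ ≤ C₁` for
every `μ ∈ P`, then
`(1/|P|) ∫_P ‖X^N_μ − L_μ‖² dμ ≤ 3 C₁² (1 + 2 N² Z_N + 8 N δ_N²/(|P| τ_N))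
  + (3/|P|) ∫_P ‖X_m (I^N g_μ − g_μ)‖² dμ`. -/
theorem approximation_error_bound_power_algorithm
    (r N q : ℕ) (hN : 0 < N)
    (K : Set (EuclideanSpace ℝ (Fin q)))
    (hKb : IsBounded K) (hKm : MeasurableSet K)
    (P : Set (EuclideanSpace ℝ (Fin r))) (hP : IsCompact P)
    (hPpos : 0 < (volume P).toReal)
    (g : EuclideanSpace ℝ (Fin r) → Lp ℝ 2 (volume.restrict K))
    (hg : ContinuousOn g P)
    (μs : Fin N → EuclideanSpace ℝ (Fin r)) (hμs : ∀ n, μs n ∈ P)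
    (hli : LinearIndependent ℝ (fun n => g (μs n)))
    (lam : EuclideanSpace ℝ (Fin r) → Fin N → ℝ)
    (hlam : ∀ n, ContinuousOn (fun μ => lam μ n) P)
    (δsq : ℝ)
    (hδsq : δsq = ∫ μ in P, ‖(∑ n, lam μ n • g (μs n)) - g μ‖ ^ 2)
    (τ : Fin N → ℝ) (ξ : Fin N → Fin N → ℝ)
    (hτmono : ∀ i j : Fin N, i ≤ j → τ j ≤ τ i)
    (hτpos : ∀ n, 0 < τ n)
    (heig : ∀ n p, τ n * ξ n p =
        (1 / (N : ℝ)) * ∑ q', ⟪g (μs p), g (μs q')⟫ * ξ n q')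
    (horth : ∀ n m, ∑ p, ξ n p * ξ m p = if n = m then (1 : ℝ) else 0)
    (Φ : Fin N → Lp ℝ 2 (volume.restrict K))
    (hΦ : ∀ n, Φ n = (Real.sqrt (N * τ n))⁻¹ • ∑ p, ξ n p • g (μs p))
    (G : Matrix (Fin N) (Fin N) ℝ)
    (hG : ∀ n p, G n p = ⟪g (μs n), Φ p⟫)
    (hGinv : IsUnit G)
    (Z : ℝ)
    (hZ : Z = (1 / (N : ℝ)) * ∑ n,
        (∫ μ in P, ⟪g μ, Φ n⟫ ^ 2) /
          (((volume P).toReal / N) * ∑ p, ⟪g (μs p), Φ n⟫ ^ 2))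
    (V : Type) [NormedAddCommGroup V] [InnerProductSpace ℝ V]
    [FiniteDimensional ℝ V] (hV : 1 ≤ Module.finrank ℝ V)
    (L : EuclideanSpace ℝ (Fin r) → V) (hL : ContinuousOn L P)
    (Xm : Lp ℝ 2 (volume.restrict K) →L[ℝ] V)
    (C₁ : ℝ) (hC₁ : 0 ≤ C₁)
    (hXmL : ∀ μ ∈ P, ‖Xm (g μ) - L μ‖ ≤ C₁) :
    (1 / (volume P).toReal) * ∫ μ in P, ‖(∑ n, lam μ n • L (μs n)) - L μ‖ ^ 2 ≤
      3 * C₁ ^ 2 *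
          (1 + 2 * (N : ℝ) ^ 2 * Z +
            8 * (N : ℝ) * δsq / ((volume P).toReal * τ ⟨N - 1, by omega⟩)) +
        (3 / (volume P).toReal) *
          ∫ μ in P, ‖Xm ((∑ n, lam μ n • g (μs n)) - g μ)‖ ^ 2 := by
  classical
  have hNR : (0:ℝ) < N := by exact_mod_cast hN
  have hN1 : (1:ℝ) ≤ N := by exact_mod_cast hN
  have hNτ : ∀ n, (0:ℝ) < (N:ℝ) * τ n := fun n => mul_pos hNR (hτpos n)
  have hPm : MeasurableSet P := hP.measurableSet
  set PV := (volume P).toReal with hPVdef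
  have hPVpos : 0 < PV := hPpos
  set nN : Fin N := ⟨N - 1, by omega⟩ with hnNdef
  have hlast : ∀ m : Fin N, τ nN ≤ τ m := by
    intro m
    apply hτmono
    rw [Fin.le_def]
    have := m.isLt
    simp only [hnNdef]
    omega
  have hτNpos : 0 < τ nN := hτpos _
  -- eigenvalue identity
  have hC : ∀ n p, ∑ q', ⟪g (μs p), g (μs q')⟫ * ξ n q' = (N:ℝ) * τ n * ξ n p := by
    intro n p
    have h := heig n p
    field_simp at h
    linarith
  -- inner products with Φ
  have hgΦ : ∀ p n, ⟪g (μs p), Φ n⟫ = Real.sqrt ((N:ℝ) * τ n) * ξ n p := by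
    intro p n
    rw [hΦ n, real_inner_smul_right, inner_sum]
    simp_rw [real_inner_smul_right]
    rw [show (∑ q', ξ n q' * ⟪g (μs p), g (μs q')⟫) = ∑ q', ⟪g (μs p), g (μs q')⟫ * ξ n q' by
      apply Finset.sum_congr rfl; intros; ring]
    rw [hC n p, show ((N:ℝ) * τ n * ξ n p) = ((N:ℝ) * τ n) * ξ n p from rfl, ← mul_assoc]
    congr 1
    rw [inv_mul_eq_div, Real.div_sqrt]
  -- Φ is orthonormal
  have hON : Orthonormal ℝ Φ := by
    rw [orthonormal_iff_ite]
    intro n m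
    have hinner : (inner ℝ (Φ n) (Φ m) : ℝ) = (Real.sqrt ((N:ℝ) * τ n))⁻¹ *
        (Real.sqrt ((N:ℝ) * τ m) * ∑ p, ξ n p * ξ m p) := by
      rw [hΦ n, real_inner_smul_left, sum_inner]
      simp_rw [real_inner_smul_left, hgΦ]
      simp_rw [Finset.mul_sum]
      apply Finset.sum_congr rfl; intros; ring
    rw [hinner, horth]
    by_cases h : n = m
    · subst h
      simp only [if_true, eq_self_iff_true, mul_one]
      exact inv_mul_cancel₀ (Real.sqrt_pos.2 (hNτ n)).ne'
    · simp [h]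
  -- column orthonormality of ξ
  have hcol : ∀ p q', ∑ n, ξ n p * ξ n q' = if p = q' then (1:ℝ) else 0 := by
    have h1 : (Matrix.of ξ) * (Matrix.of ξ).transpose = 1 := by
      ext n m
      simp [Matrix.mul_apply, Matrix.one_apply, horth n m]
    have h2 : (Matrix.of ξ).transpose * (Matrix.of ξ) = 1 := mul_eq_one_comm.1 h1
    intro p q'
    have := congrFun (congrFun h2 p) q'
    simpa [Matrix.mul_apply, Matrix.one_apply] using this
  -- rotation invariance of sum of squares
  have hsumsq : ∀ lamv : Fin N → ℝ, ∑ m, (∑ n, ξ m n * lamv n)^2 = ∑ n, lamv n ^ 2 := by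
    intro lamv
    calc ∑ m, (∑ n, ξ m n * lamv n)^2
        = ∑ m, ∑ n, ∑ n', (ξ m n * lamv n) * (ξ m n' * lamv n') := by
          simp_rw [sq, Finset.sum_mul_sum]
      _ = ∑ n, ∑ n', (lamv n * lamv n') * ∑ m, ξ m n * ξ m n' := by
          rw [Finset.sum_comm]
          apply Finset.sum_congr rfl; intro n _
          rw [Finset.sum_comm]
          apply Finset.sum_congr rfl; intro n' _
          rw [Finset.mul_sum]
          apply Finset.sum_congr rfl; intros; ring
      _ = ∑ n, lamv n ^ 2 := by
          simp_rw [hcol]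
          simp [sq]
  -- column sums of G
  have hcolsum : ∀ n, ∑ p, ⟪g (μs p), Φ n⟫ ^ 2 = (N:ℝ) * τ n := by
    intro n
    simp_rw [hgΦ, mul_pow]
    rw [← Finset.mul_sum]
    have h1 : ∑ p, ξ n p ^ 2 = 1 := by
      have h := horth n n
      simp only [if_true, eq_self_iff_true] at h
      rw [← h]
      apply Finset.sum_congr rfl; intros; ring
    rw [h1, Real.sq_sqrt (hNτ n).le, mul_one]
  -- coefficient identity
  have hkey : ∀ (m : Fin N) (lamv : Fin N → ℝ),
      ⟪∑ n, lamv n • g (μs n), Φ m⟫ = Real.sqrt ((N:ℝ) * τ m) * ∑ n, ξ m n * lamv n := by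
    intro m lamv
    rw [sum_inner]
    simp_rw [real_inner_smul_left, hgΦ]
    rw [Finset.mul_sum]
    apply Finset.sum_congr rfl; intros; ring
  have hlamsq : ∀ (lamv : Fin N → ℝ),
      (N:ℝ) * ∑ n, lamv n ^ 2 = ∑ m, ⟪∑ n, lamv n • g (μs n), Φ m⟫^2 / τ m := by
    intro lamv
    have h1 : ∀ m : Fin N, ⟪∑ n, lamv n • g (μs n), Φ m⟫^2 / τ m
        = (N:ℝ) * (∑ n, ξ m n * lamv n)^2 := by
      intro m
      rw [hkey m lamv, mul_pow, Real.sq_sqrt (hNτ m).le]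
      rw [show (N:ℝ) * τ m * (∑ n, ξ m n * lamv n)^2
          = τ m * ((N:ℝ) * (∑ n, ξ m n * lamv n)^2) by ring]
      rw [mul_comm (τ m), mul_div_assoc, div_self (hτpos m).ne', mul_one]
    simp_rw [h1]
    rw [← Finset.mul_sum, hsumsq lamv]
  -- the pointwise bound
  have hpoint : ∀ μ ∈ P, ‖(∑ n, lam μ n • L (μs n)) - L μ‖^2 ≤
      3*C₁^2*(1 + (2*(∑ m, ⟪g μ, Φ m⟫^2 / τ m)
        + 2*(‖(∑ n, lam μ n • g (μs n)) - g μ‖^2 / τ nN)))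
      + 3*‖Xm ((∑ n, lam μ n • g (μs n)) - g μ)‖^2 := by
    intro μ hμ
    have hB : Xm ((∑ n, lam μ n • g (μs n)) - g μ)
        = (∑ n, lam μ n • Xm (g (μs n))) - Xm (g μ) := by
      rw [map_sub, map_sum]
      simp_rw [_root_.map_smul]
    have hdecomp : (∑ n, lam μ n • L (μs n)) - L μ =
        (∑ n, lam μ n • (L (μs n) - Xm (g (μs n))))
        + Xm ((∑ n, lam μ n • g (μs n)) - g μ) + (Xm (g μ) - L μ) := by
      rw [hB]
      simp_rw [smul_sub]
      rw [Finset.sum_sub_distrib]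
      abel
    have hAn : ‖∑ n, lam μ n • (L (μs n) - Xm (g (μs n)))‖ ≤ C₁ * ∑ n, |lam μ n| := by
      calc ‖∑ n, lam μ n • (L (μs n) - Xm (g (μs n)))‖
          ≤ ∑ n, ‖lam μ n • (L (μs n) - Xm (g (μs n)))‖ := norm_sum_le _ _
        _ ≤ ∑ n, |lam μ n| * C₁ := by
            apply Finset.sum_le_sum; intro n _
            rw [norm_smul, Real.norm_eq_abs]
            exact mul_le_mul_of_nonneg_left
              (by rw [norm_sub_rev]; exact hXmL (μs n) (hμs n)) (abs_nonneg _)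
        _ = C₁ * ∑ n, |lam μ n| := by rw [← Finset.sum_mul]; ring
    have habs : (∑ n, |lam μ n|)^2 ≤ (N:ℝ) * ∑ n, lam μ n ^ 2 := by
      have h := sq_sum_le_card_mul_sum_sq (s := (Finset.univ : Finset (Fin N)))
        (f := fun n => |lam μ n|)
      simpa [sq_abs] using h
    have hAsq : ‖∑ n, lam μ n • (L (μs n) - Xm (g (μs n)))‖^2
        ≤ C₁^2 * ((N:ℝ) * ∑ n, lam μ n ^ 2) := by
      have h1 : ‖∑ n, lam μ n • (L (μs n) - Xm (g (μs n)))‖^2 ≤ (C₁ * ∑ n, |lam μ n|)^2 :=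
        pow_le_pow_left₀ (norm_nonneg _) hAn 2
      have h2 : (C₁ * ∑ n, |lam μ n|)^2 = C₁^2 * (∑ n, |lam μ n|)^2 := by ring
      rw [h2] at h1
      exact h1.trans (mul_le_mul_of_nonneg_left habs (sq_nonneg C₁))
    -- coefficient bound
    have hcoef : (N:ℝ) * ∑ n, lam μ n ^ 2 ≤ 2*(∑ m, ⟪g μ, Φ m⟫^2 / τ m)
        + 2*(‖(∑ n, lam μ n • g (μs n)) - g μ‖^2 / τ nN) := by
      rw [hlamsq (lam μ)]
      have hsplit : (∑ n, lam μ n • g (μs n))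
          = g μ + ((∑ n, lam μ n • g (μs n)) - g μ) := by abel
      have hbessel : ∑ m, ⟪(∑ n, lam μ n • g (μs n)) - g μ, Φ m⟫^2
          ≤ ‖(∑ n, lam μ n • g (μs n)) - g μ‖^2 := by
        have h := hON.sum_inner_products_le (s := (Finset.univ : Finset (Fin N)))
          ((∑ n, lam μ n • g (μs n)) - g μ)
        have h2 : ∀ m : Fin N, ‖(inner ℝ (Φ m) ((∑ n, lam μ n • g (μs n)) - g μ) : ℝ)‖^2
            = ⟪(∑ n, lam μ n • g (μs n)) - g μ, Φ m⟫^2 := by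
          intro m
          rw [Real.norm_eq_abs, sq_abs, real_inner_comm]
        simp_rw [h2] at h
        exact h
      have hterm : ∀ m : Fin N, ⟪∑ n, lam μ n • g (μs n), Φ m⟫^2 / τ m
          ≤ 2*(⟪g μ, Φ m⟫^2 / τ m)
            + 2*(⟪(∑ n, lam μ n • g (μs n)) - g μ, Φ m⟫^2 / τ nN) := by
        intro m
        have hin : ⟪∑ n, lam μ n • g (μs n), Φ m⟫
            = ⟪g μ, Φ m⟫ + ⟪(∑ n, lam μ n • g (μs n)) - g μ, Φ m⟫ := by
          conv_lhs => rw [hsplit]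
          rw [inner_add_left]
        exact aux_sq_div _ _ _ _ _ hin (hτpos m) hτNpos (hlast m)
      calc ∑ m, ⟪∑ n, lam μ n • g (μs n), Φ m⟫^2 / τ m
          ≤ ∑ m, (2*(⟪g μ, Φ m⟫^2 / τ m)
            + 2*(⟪(∑ n, lam μ n • g (μs n)) - g μ, Φ m⟫^2 / τ nN)) :=
            Finset.sum_le_sum fun m _ => hterm m
        _ = 2*(∑ m, ⟪g μ, Φ m⟫^2 / τ m)
            + 2*((∑ m, ⟪(∑ n, lam μ n • g (μs n)) - g μ, Φ m⟫^2) / τ nN) := by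
            rw [Finset.sum_add_distrib, ← Finset.mul_sum, ← Finset.mul_sum, Finset.sum_div]
        _ ≤ 2*(∑ m, ⟪g μ, Φ m⟫^2 / τ m)
            + 2*(‖(∑ n, lam μ n • g (μs n)) - g μ‖^2 / τ nN) :=
            add_le_add le_rfl (mul_le_mul_of_nonneg_left
              (div_le_div_of_nonneg_right hbessel hτNpos.le) (by norm_num))
    -- assemble
    have htri : ‖(∑ n, lam μ n • L (μs n)) - L μ‖
        ≤ ‖∑ n, lam μ n • (L (μs n) - Xm (g (μs n)))‖
          + ‖Xm ((∑ n, lam μ n • g (μs n)) - g μ)‖ + ‖Xm (g μ) - L μ‖ := by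
      rw [hdecomp]
      exact norm_add₃_le
    exact aux_assemble _ _ _ _ _ _ _ _ (norm_nonneg _) (norm_nonneg _)
      (norm_nonneg _) (norm_nonneg _) htri hAsq hcoef (hXmL μ hμ)
  -- continuity / integrability
  have hgsum : ContinuousOn (fun μ => ∑ n, lam μ n • g (μs n)) P :=
    continuousOn_finset_sum _ fun n _ => (hlam n).smul continuousOn_const
  have hec : ContinuousOn (fun μ => (∑ n, lam μ n • g (μs n)) - g μ) P := hgsum.sub hg
  have hFa : ∀ m, IntegrableOn (fun μ => ⟪g μ, Φ m⟫^2) P volume := fun m =>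
    ((hg.inner continuousOn_const).pow 2).integrableOn_compact hP
  have hFb : IntegrableOn (fun μ => ‖(∑ n, lam μ n • g (μs n)) - g μ‖^2) P volume :=
    (hec.norm.pow 2).integrableOn_compact hP
  have hFc : IntegrableOn (fun μ => ‖Xm ((∑ n, lam μ n • g (μs n)) - g μ)‖^2) P volume :=
    ((Xm.continuous.comp_continuousOn hec).norm.pow 2).integrableOn_compact hP
  have hF0 : IntegrableOn (fun μ => ‖(∑ n, lam μ n • L (μs n)) - L μ‖^2) P volume := by
    apply ContinuousOn.integrableOn_compact hP
    exact (((continuousOn_finset_sum _ fun n _ =>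
      (hlam n).smul continuousOn_const).sub hL).norm.pow 2)
  have hconst : IntegrableOn (fun _ : EuclideanSpace ℝ (Fin r) => (1:ℝ)) P volume := by
    rw [integrableOn_const_iff]
    exact Or.inr (hP.measure_lt_top)
  have hFS : IntegrableOn (fun μ => ∑ m, ⟪g μ, Φ m⟫^2 / τ m) P volume :=
    MeasureTheory.integrable_finset_sum _ fun m _ => (hFa m).div_const _
  have hS2 : IntegrableOn (fun μ => 2*(∑ m, ⟪g μ, Φ m⟫^2 / τ m)) P volume := by
    exact hFS.const_mul 2
  have hB2 : IntegrableOn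
      (fun μ => 2*(‖(∑ n, lam μ n • g (μs n)) - g μ‖^2 / τ nN)) P volume := by
    exact (hFb.div_const _).const_mul 2
  have hSB : IntegrableOn (fun μ => 2*(∑ m, ⟪g μ, Φ m⟫^2 / τ m)
      + 2*(‖(∑ n, lam μ n • g (μs n)) - g μ‖^2 / τ nN)) P volume := by
    exact hS2.add hB2
  have hF1inner : IntegrableOn (fun μ => 1 + (2*(∑ m, ⟪g μ, Φ m⟫^2 / τ m)
      + 2*(‖(∑ n, lam μ n • g (μs n)) - g μ‖^2 / τ nN))) P volume := by
    exact hconst.add hSB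
  have hF13 : IntegrableOn (fun μ => 3*C₁^2*(1 + (2*(∑ m, ⟪g μ, Φ m⟫^2 / τ m)
      + 2*(‖(∑ n, lam μ n • g (μs n)) - g μ‖^2 / τ nN)))) P volume := by
    exact hF1inner.const_mul _
  have hFc3 : IntegrableOn
      (fun μ => 3*‖Xm ((∑ n, lam μ n • g (μs n)) - g μ)‖^2) P volume := by
    exact hFc.const_mul 3
  have hF1 : IntegrableOn (fun μ => 3*C₁^2*(1 + (2*(∑ m, ⟪g μ, Φ m⟫^2 / τ m)
      + 2*(‖(∑ n, lam μ n • g (μs n)) - g μ‖^2 / τ nN)))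
      + 3*‖Xm ((∑ n, lam μ n • g (μs n)) - g μ)‖^2) P volume := by
    exact hF13.add hFc3
  -- integrate the pointwise bound
  have hmono : (∫ μ in P, ‖(∑ n, lam μ n • L (μs n)) - L μ‖^2)
      ≤ ∫ μ in P, (3*C₁^2*(1 + (2*(∑ m, ⟪g μ, Φ m⟫^2 / τ m)
        + 2*(‖(∑ n, lam μ n • g (μs n)) - g μ‖^2 / τ nN)))
        + 3*‖Xm ((∑ n, lam μ n • g (μs n)) - g μ)‖^2) :=
    setIntegral_mono_on hF0 hF1 hPm hpoint
  -- compute the right-hand integral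
  have hIeq : (∫ μ in P, (3*C₁^2*(1 + (2*(∑ m, ⟪g μ, Φ m⟫^2 / τ m)
      + 2*(‖(∑ n, lam μ n • g (μs n)) - g μ‖^2 / τ nN)))
      + 3*‖Xm ((∑ n, lam μ n • g (μs n)) - g μ)‖^2))
      = 3*C₁^2*(PV + (2*(∑ m, (∫ μ in P, ⟪g μ, Φ m⟫^2) / τ m) + 2*(δsq / τ nN)))
        + 3*(∫ μ in P, ‖Xm ((∑ n, lam μ n • g (μs n)) - g μ)‖^2) := by
    rw [integral_add hF13 hFc3]
    rw [integral_const_mul, integral_const_mul]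
    congr 1
    congr 1
    rw [integral_add hconst hSB]
    rw [integral_add hS2 hB2]
    rw [integral_const_mul, integral_const_mul]
    rw [setIntegral_const]
    rw [MeasureTheory.integral_finset_sum _ fun m _ => (hFa m).div_const _]
    simp_rw [integral_div]
    rw [hδsq]
    simp
    rfl
  -- nonnegativity facts
  have hSnn : 0 ≤ ∑ m, (∫ μ in P, ⟪g μ, Φ m⟫^2) / τ m :=
    Finset.sum_nonneg fun m _ =>
      div_nonneg (setIntegral_nonneg hPm fun x _ => sq_nonneg _) (hτpos m).le
  have hdnn : 0 ≤ δsq := by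
    rw [hδsq]
    exact setIntegral_nonneg hPm fun x _ => sq_nonneg _
  have hJnn : 0 ≤ ∫ μ in P, ‖Xm ((∑ n, lam μ n • g (μs n)) - g μ)‖^2 :=
    setIntegral_nonneg hPm fun x _ => sq_nonneg _
  -- value of Z
  have hZval : Z = (∑ m, (∫ μ in P, ⟪g μ, Φ m⟫^2) / τ m) / ((N:ℝ) * PV) := by
    rw [hZ]
    have h1 : ∀ n : Fin N, (∫ μ in P, ⟪g μ, Φ n⟫^2)
        / ((PV / N) * ∑ p, ⟪g (μs p), Φ n⟫^2)
        = ((∫ μ in P, ⟪g μ, Φ n⟫^2) / τ n) / PV := by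
      intro n
      rw [hcolsum n, div_div]
      congr 1
      field_simp
    simp_rw [h1]
    rw [← Finset.sum_div]
    field_simp
  -- final algebra
  have hfinal : 3*C₁^2*(PV + (2*(∑ m, (∫ μ in P, ⟪g μ, Φ m⟫^2) / τ m) + 2*(δsq / τ nN)))
      + 3*(∫ μ in P, ‖Xm ((∑ n, lam μ n • g (μs n)) - g μ)‖^2)
      ≤ PV * (3 * C₁ ^ 2 * (1 + 2 * (N : ℝ) ^ 2 * Z + 8 * (N : ℝ) * δsq / (PV * τ nN)) +
          3 / PV * ∫ μ in P, ‖Xm ((∑ n, lam μ n • g (μs n)) - g μ)‖ ^ 2) := by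
    exact aux_final PV (τ nN) _ δsq _ C₁ (N:ℝ) Z hPVpos hτNpos hSnn hdnn hN1 hZval
  -- conclude
  have hchain : (∫ μ in P, ‖(∑ n, lam μ n • L (μs n)) - L μ‖^2)
      ≤ PV * (3 * C₁ ^ 2 * (1 + 2 * (N : ℝ) ^ 2 * Z + 8 * (N : ℝ) * δsq / (PV * τ nN)) +
          3 / PV * ∫ μ in P, ‖Xm ((∑ n, lam μ n • g (μs n)) - g μ)‖ ^ 2) := by
    calc (∫ μ in P, ‖(∑ n, lam μ n • L (μs n)) - L μ‖^2)
        ≤ _ := hmono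
      _ = _ := hIeq
      _ ≤ _ := hfinal
  have hR : (1/PV) * (∫ μ in P, ‖(∑ n, lam μ n • L (μs n)) - L μ‖^2)
      ≤ (1/PV) * (PV * (3 * C₁ ^ 2 * (1 + 2 * (N : ℝ) ^ 2 * Z
          + 8 * (N : ℝ) * δsq / (PV * τ nN)) +
          3 / PV * ∫ μ in P, ‖Xm ((∑ n, lam μ n • g (μs n)) - g μ)‖ ^ 2)) :=
    mul_le_mul_of_nonneg_left hchain (by positivity)
  calc (1/PV) * (∫ μ in P, ‖(∑ n, lam μ n • L (μs n)) - L μ‖^2)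
      ≤ _ := hR
    _ = 3 * C₁ ^ 2 * (1 + 2 * (N : ℝ) ^ 2 * Z + 8 * (N : ℝ) * δsq / (PV * τ nN)) +
        3 / PV * ∫ μ in P, ‖Xm ((∑ n, lam μ n • g (μs n)) - g μ)‖ ^ 2 := by
      rw [← mul_assoc, one_div, inv_mul_cancel₀ hPVpos.ne', one_mul]
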